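/- Let H be a connected finite simple block graph and let B be a block of H with vertex set V(B) = {u_1, u_2, …, u_k}. For each 1 ≤ i ≤ k, let G_i denote the connected component containing u_i of the subgraph of H induced by (V(H) ∖ V(B)) ∪ {u_i}, and for S ⊆ V(H) write S_i = S ∩ V(G_i). If S is a paired-dominating set of H with u_1 ∈ S, then S_1 contains u_1, S_1 is a dominating set of G_1, and either the induced subgraph G_1[S_1] has a perfect matching or the induced subgraph G_1[S_1 ∖ {u_1}] has a perfect matching. -/

import Mathlib

open SimpleGraph

variable {V : Type*}

/-- `S` is a dominating set of `G`. -/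
def Dominating (G : SimpleGraph V) (S : Set V) : Prop :=
  ∀ v ∉ S, ∃ u ∈ S, G.Adj v u

/-- Within the subgraph of `G` induced by `A` (for `S ⊆ A`), the set `S` dominates
every vertex of `A \ S`. -/
def DominatingOn (G : SimpleGraph V) (A S : Set V) : Prop :=
  ∀ v ∈ A, v ∉ S → ∃ w ∈ S, G.Adj v w

/-- The induced subgraph `G[S]` has a perfect matching, i.e. there is a matching of `G`
whose vertex set is exactly `S`. -/
def HasPerfectMatchingOn (G : SimpleGraph V) (S : Set V) : Prop :=
  ∃ M : G.Subgraph, M.verts = S ∧ M.IsMatching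

/-- `S` is a paired-dominating set of `G`. -/
def PairedDominating (G : SimpleGraph V) (S : Set V) : Prop :=
  Dominating G S ∧ HasPerfectMatchingOn G S

/-- `v` is a cut vertex: deleting it disconnects the graph. -/
def IsCutVertex (G : SimpleGraph V) (v : V) : Prop :=
  ¬ (G.induce ({v}ᶜ : Set V)).Preconnected

/-- The graph has no cut vertex. -/
def HasNoCutVertex (G : SimpleGraph V) : Prop :=
  ∀ v : V, ¬ IsCutVertex G v

/-- `B` is a block of `G`: a maximal vertex set inducing a connected subgraph with no
cut vertex. -/
def IsBlock (G : SimpleGraph V) (B : Set V) : Prop :=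
  (G.induce B).Connected ∧ HasNoCutVertex (G.induce B) ∧
    ∀ B' : Set V, B ⊆ B' → (G.induce B').Connected → HasNoCutVertex (G.induce B') → B' = B

/-- `G` is a block graph: every block is a complete subgraph. -/
def IsBlockGraph (G : SimpleGraph V) : Prop :=
  ∀ B : Set V, IsBlock G B → B.Pairwise G.Adj

/-- The vertex set of the connected component containing `u` of the subgraph of `G`
induced by `A`. -/
def componentOf (G : SimpleGraph V) (A : Set V) (u : V) : Set V :=
  {v | ∃ (hu : u ∈ A) (hv : v ∈ A), (G.induce A).Reachable ⟨u, hu⟩ ⟨v, hv⟩}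


lemma reachable_induce_of_walk {H : SimpleGraph V} {A C : Set V} {a b : A}
    (W : (H.induce A).Walk a b) (hC : ∀ x ∈ W.support, (x : V) ∈ C) :
    (H.induce C).Reachable ⟨a, hC a W.start_mem_support⟩ ⟨b, hC b W.end_mem_support⟩ := by
  induction W with
  | nil => exact Reachable.refl _
  | @cons a c b h p ih =>
    have hcC : (c : V) ∈ C := hC c (by rw [Walk.support_cons]; exact List.mem_cons_of_mem _ p.start_mem_support)
    have h1 : (H.induce C).Adj ⟨a, hC a (Walk.start_mem_support _)⟩ ⟨c, hcC⟩ := h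
    exact h1.reachable.trans (ih (fun x hx => hC x (by rw [Walk.support_cons]; exact List.mem_cons_of_mem _ hx)))

lemma mem_take_and_drop [DecidableEq V] {G : SimpleGraph V} {a b c : V} {p : G.Walk a b} (hp : p.IsPath)
    (hc : c ∈ p.support) {x : V} (hx1 : x ∈ (p.takeUntil c hc).support)
    (hx2 : x ∈ (p.dropUntil c hc).support) : x = c := by
  have hnd := hp.support_nodup
  rw [← Walk.take_spec p hc, Walk.support_append] at hnd
  have hd := List.disjoint_of_nodup_append hnd
  rw [Walk.support_eq_cons (p.dropUntil c hc)] at hx2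
  rcases List.mem_cons.1 hx2 with h | h
  · exact h
  · exact absurd h (hd hx1)

lemma preconnected_of_hub {H : SimpleGraph V} {D : Set V} {h₀ : V} (hh : h₀ ∈ D)
    (hr : ∀ c (hc : c ∈ D), (H.induce D).Reachable ⟨c, hc⟩ ⟨h₀, hh⟩) :
    (H.induce D).Preconnected := by
  rintro ⟨p, hp⟩ ⟨q, hq⟩
  exact (hr p hp).trans (hr q hq).symm

lemma reach_in_complete {H : SimpleGraph V} {B : Set V} (hBadj : B.Pairwise H.Adj)
    {D : Set V} {c h₀ : V} (hc : c ∈ D) (hh : h₀ ∈ D) (hcB : c ∈ B) (hhB : h₀ ∈ B) :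
    (H.induce D).Reachable ⟨c, hc⟩ ⟨h₀, hh⟩ := by
  by_cases e : c = h₀
  · subst e; exact Reachable.refl _
  · have h1 : (H.induce D).Adj ⟨c, hc⟩ ⟨h₀, hh⟩ := hBadj hcB hhB e
    exact h1.reachable

lemma noCutVertex_of_del {H : SimpleGraph V} {C : Set V}
    (h : ∀ x ∈ C, (H.induce (C \ {x})).Preconnected) : HasNoCutVertex (H.induce C) := by
  rintro ⟨x, hx⟩ hcut
  apply hcut
  rintro ⟨⟨p, hpC⟩, hp⟩ ⟨⟨q, hqC⟩, hq⟩
  have hp' : p ∈ C \ {x} := ⟨hpC, fun hm => hp (by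
    simp only [Set.mem_compl_iff, Set.mem_singleton_iff] at *
    exact Subtype.ext hm)⟩
  have hq' : q ∈ C \ {x} := ⟨hqC, fun hm => hq (by
    simp only [Set.mem_compl_iff, Set.mem_singleton_iff] at *
    exact Subtype.ext hm)⟩
  have hr := h x hx ⟨p, hp'⟩ ⟨q, hq'⟩
  obtain ⟨W⟩ := hr
  constructor
  let f : H.induce (C \ {x}) →g (H.induce C).induce ({(⟨x, hx⟩ : C)}ᶜ : Set C) :=
    ⟨fun y => ⟨⟨y.1, y.2.1⟩, fun hm => y.2.2 (by
        simp only [Set.mem_singleton_iff] at hm ⊢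
        exact congrArg Subtype.val hm)⟩,
      fun hadj => hadj⟩
  exact (W.map f).copy (Subtype.ext (Subtype.ext rfl)) (Subtype.ext (Subtype.ext rfl))


lemma key_block [DecidableEq V] {H : SimpleGraph V} (hbg : IsBlockGraph H) {B : Set V}
    (hB : IsBlock H B) {u₁ v w : V} (hu₁B : u₁ ∈ B)
    (hv : v ∈ componentOf H (Bᶜ ∪ {u₁}) u₁) (hvne : v ≠ u₁)
    (hwB : w ∈ B) (hwne : w ≠ u₁) (hadj : H.Adj v w) : False := by
  obtain ⟨huA, hvA, hr⟩ := hv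
  set A : Set V := Bᶜ ∪ {u₁} with hA
  obtain ⟨W0⟩ := hr
  set Pw : (H.induce A).Walk ⟨u₁, huA⟩ ⟨v, hvA⟩ := (W0.toPath : (H.induce A).Path _ _).1 with hPwdef
  have hPw : Pw.IsPath := (W0.toPath).2
  set supp : Set V := Subtype.val '' {z : A | z ∈ Pw.support} with hsupp
  set C : Set V := B ∪ supp with hC
  have hBC : B ⊆ C := Set.subset_union_left
  have hsubC : ∀ z ∈ Pw.support, (z : V) ∈ C := fun z hz => Or.inr ⟨z, hz, rfl⟩
  have hsuppA : ∀ y ∈ supp, y ∈ A := by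
    rintro y ⟨z, _, rfl⟩; exact z.2
  have hBadj : B.Pairwise H.Adj := hbg B hB
  have hu₁C : u₁ ∈ C := hBC hu₁B
  have hvC : v ∈ C := hsubC _ Pw.end_mem_support
  have hwA : w ∉ A := by
    rintro (h | h)
    · exact h hwB
    · exact hwne h
  -- every vertex of C reaches u₁ in induce C
  have hconn : (H.induce C).Connected := by
    rw [connected_iff]
    refine ⟨preconnected_of_hub hu₁C ?_, ⟨⟨u₁, hu₁C⟩⟩⟩
    intro c hc
    rcases hc with hcB | ⟨z, hz, rfl⟩
    · exact reach_in_complete hBadj _ _ hcB hu₁B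
    · have := reachable_induce_of_walk (Pw.takeUntil z hz)
        (fun x hx => hsubC x (Walk.support_takeUntil_subset _ _ hx))
      exact this.symm
  -- no cut vertex
  have hnocut : HasNoCutVertex (H.induce C) := by
    apply noCutVertex_of_del
    intro x hxC
    by_cases hxs : x ∈ supp
    · obtain ⟨z₀, hz₀, rfl⟩ := hxs
      by_cases hx1 : (z₀ : V) = u₁
      · -- deleted vertex is u₁; hub is w
        have hwD : w ∈ C \ {(z₀ : V)} := ⟨hBC hwB, by simp only [Set.mem_singleton_iff, hx1]; exact hwne⟩
        refine preconnected_of_hub hwD ?_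
        rintro c ⟨hc, hcx⟩
        simp only [Set.mem_singleton_iff] at hcx
        rcases hc with hcB | ⟨z, hz, rfl⟩
        · exact reach_in_complete hBadj _ _ hcB hwB
        · -- z on the path, z ≠ u₁ ; walk from z to v avoiding u₁
          have hz₀start : z₀ = (⟨u₁, huA⟩ : A) := Subtype.ext hx1
          have hRsup : ∀ y ∈ (Pw.dropUntil z hz).support, (y : V) ∈ C \ {(z₀ : V)} := by
            intro y hy
            refine ⟨hsubC y (Walk.support_dropUntil_subset _ _ hy), ?_⟩
            simp only [Set.mem_singleton_iff]
            intro hyx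
            have hyz : y = z₀ := Subtype.ext hyx
            subst hyz
            have hyin : y ∈ (Pw.takeUntil z hz).support := by
              rw [hz₀start]; exact Walk.start_mem_support _
            have := mem_take_and_drop hPw hz hyin hy
            rw [this] at hcx
            exact hcx rfl
          have h1 := reachable_induce_of_walk (Pw.dropUntil z hz) hRsup
          have hvD : v ∈ C \ {(z₀ : V)} := ⟨hvC, by simp [hx1, hvne]⟩
          have h2 : (H.induce (C \ {(z₀:V)})).Adj ⟨v, hvD⟩ ⟨w, hwD⟩ := hadj
          exact (h1.trans h2.reachable)
      · -- deleted vertex is on path, ≠ u₁; hub is u₁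
        have hu₁D : u₁ ∈ C \ {(z₀ : V)} := ⟨hu₁C, by simp [Ne.symm hx1]⟩
        refine preconnected_of_hub hu₁D ?_
        rintro c ⟨hc, hcx⟩
        simp only [Set.mem_singleton_iff] at hcx
        rcases hc with hcB | ⟨z, hz, rfl⟩
        · exact reach_in_complete hBadj _ _ hcB hu₁B
        · have hzz₀ : z ≠ z₀ := fun h => hcx (congrArg Subtype.val h)
          have hz' : z ∈ ((Pw.takeUntil z₀ hz₀).append (Pw.dropUntil z₀ hz₀)).support := by
            rw [Walk.take_spec]; exact hz
          rw [Walk.mem_support_append_iff] at hz'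
          rcases hz' with hz1 | hz2
          · -- z before z₀ : walk u₁ → z inside take, avoiding z₀
            have hQ1 : (Pw.takeUntil z₀ hz₀).IsPath := hPw.takeUntil _
            have hTsup : ∀ y ∈ ((Pw.takeUntil z₀ hz₀).takeUntil z hz1).support,
                (y : V) ∈ C \ {(z₀ : V)} := by
              intro y hy
              have hyP : y ∈ Pw.support :=
                Walk.support_takeUntil_subset _ _ (Walk.support_takeUntil_subset _ _ hy)
              refine ⟨hsubC y hyP, ?_⟩
              simp only [Set.mem_singleton_iff]
              intro hyx
              have hyz : y = z₀ := Subtype.ext hyx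
              have hyend : z₀ ∈ ((Pw.takeUntil z₀ hz₀).dropUntil z hz1).support :=
                Walk.end_mem_support _
              exact hzz₀ (mem_take_and_drop hQ1 hz1 (hyz ▸ hy) hyend).symm
            exact (reachable_induce_of_walk _ hTsup).symm
          · -- z after z₀ : walk z → v inside drop, then v - w - u₁
            have hQ2 : (Pw.dropUntil z₀ hz₀).IsPath := hPw.dropUntil _
            have hRsup : ∀ y ∈ ((Pw.dropUntil z₀ hz₀).dropUntil z hz2).support,
                (y : V) ∈ C \ {(z₀ : V)} := by
              intro y hy
              have hyP : y ∈ Pw.support :=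
                Walk.support_dropUntil_subset _ _ (Walk.support_dropUntil_subset _ _ hy)
              refine ⟨hsubC y hyP, ?_⟩
              simp only [Set.mem_singleton_iff]
              intro hyx
              have hyz : y = z₀ := Subtype.ext hyx
              have hystart : z₀ ∈ ((Pw.dropUntil z₀ hz₀).takeUntil z hz2).support :=
                Walk.start_mem_support _
              exact hzz₀ (mem_take_and_drop hQ2 hz2 hystart (hyz ▸ hy)).symm
            have h1 := reachable_induce_of_walk _ hRsup
            have hvD : v ∈ C \ {(z₀ : V)} :=
              hRsup _ (Walk.end_mem_support _)
            have hwD : w ∈ C \ {(z₀ : V)} := ⟨hBC hwB, by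
              simp only [Set.mem_singleton_iff]
              intro h; exact hwA (h ▸ z₀.2)⟩
            have h2 : (H.induce (C \ {(z₀:V)})).Adj ⟨v, hvD⟩ ⟨w, hwD⟩ := hadj
            have h3 : (H.induce (C \ {(z₀:V)})).Reachable ⟨w, hwD⟩ ⟨u₁, hu₁D⟩ :=
              reach_in_complete hBadj _ _ hwB hu₁B
            exact (h1.trans h2.reachable).trans h3
    · -- deleted vertex not on path; hub u₁
      have hxu₁ : x ≠ u₁ := fun h => hxs (h ▸ ⟨⟨u₁, huA⟩, Pw.start_mem_support, rfl⟩)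
      have hu₁D : u₁ ∈ C \ {x} := ⟨hu₁C, by simp [Ne.symm hxu₁]⟩
      refine preconnected_of_hub hu₁D ?_
      rintro c ⟨hc, hcx⟩
      rcases hc with hcB | ⟨z, hz, rfl⟩
      · exact reach_in_complete hBadj _ _ hcB hu₁B
      · have hTsup : ∀ y ∈ (Pw.takeUntil z hz).support, (y : V) ∈ C \ {x} := by
          intro y hy
          have hyP : y ∈ Pw.support := Walk.support_takeUntil_subset _ _ hy
          exact ⟨hsubC y hyP, by
            simp only [Set.mem_singleton_iff]
            intro h; exact hxs (h ▸ ⟨y, hyP, rfl⟩)⟩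
        exact (reachable_induce_of_walk _ hTsup).symm
  have hCB : C = B := hB.2.2 C hBC hconn hnocut
  have hvB : v ∈ B := hCB ▸ hvC
  rcases hvA with h | h
  · exact h hvB
  · exact hvne h


lemma matching_restrict {H : SimpleGraph V} {S T : Set V} (M : H.Subgraph)
    (hMv : M.verts = S) (hM : M.IsMatching) (hTS : T ⊆ S)
    (hclosed : ∀ a ∈ T, ∀ b, M.Adj a b → b ∈ T) :
    HasPerfectMatchingOn H T := by
  refine ⟨⟨T, fun a b => M.Adj a b ∧ a ∈ T ∧ b ∈ T,
    fun h => M.adj_sub h.1, fun h => h.2.1,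
    ⟨fun a b h => ⟨h.1.symm, h.2.2, h.2.1⟩⟩⟩, rfl, ?_⟩
  intro a ha
  obtain ⟨b, hb, huniq⟩ := hM (show a ∈ M.verts from hMv ▸ hTS ha)
  exact ⟨b, ⟨hb, ha, hclosed a ha b hb⟩, fun y hy => huniq y hy.1⟩

theorem stmt_9 {V : Type*} [Fintype V] (H : SimpleGraph V) (hH : H.Connected)
    (hbg : IsBlockGraph H) (B : Set V) (hB : IsBlock H B)
    (k : ℕ) (hk : 0 < k) (u : Fin k → V) (huinj : Function.Injective u)
    (hurange : Set.range u = B)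
    (G' : Fin k → Set V) (hG' : ∀ i : Fin k, G' i = componentOf H (Bᶜ ∪ {u i}) (u i))
    (S : Set V) (hpd : PairedDominating H S) (hu₁ : u ⟨0, hk⟩ ∈ S) :
    u ⟨0, hk⟩ ∈ S ∩ G' ⟨0, hk⟩ ∧
      DominatingOn H (G' ⟨0, hk⟩) (S ∩ G' ⟨0, hk⟩) ∧
      (HasPerfectMatchingOn H (S ∩ G' ⟨0, hk⟩) ∨
        HasPerfectMatchingOn H ((S ∩ G' ⟨0, hk⟩) \ {u ⟨0, hk⟩})) := by
  classical
  set u₁ : V := u ⟨0, hk⟩ with hu₁def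
  have hu₁B : u₁ ∈ B := hurange ▸ Set.mem_range_self _
  set A : Set V := Bᶜ ∪ {u₁} with hA
  have hu₁A : u₁ ∈ A := Or.inr rfl
  have hG1 : G' ⟨0, hk⟩ = componentOf H A u₁ := hG' _
  have hu₁G : u₁ ∈ componentOf H A u₁ := ⟨hu₁A, hu₁A, Reachable.refl _⟩
  -- closure of the component under adjacency
  have hclose : ∀ v ∈ componentOf H A u₁, ∀ x ∈ A, H.Adj v x → x ∈ componentOf H A u₁ := by
    rintro v ⟨hu, hvA, hr⟩ x hx hadj
    have h1 : (H.induce A).Adj ⟨v, hvA⟩ ⟨x, hx⟩ := hadj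
    exact ⟨hu, hx, hr.trans h1.reachable⟩
  have hstep : ∀ v ∈ componentOf H A u₁, v ≠ u₁ → ∀ x, H.Adj v x →
      x ∈ componentOf H A u₁ := by
    intro v hv hvne x hadj
    by_cases hxB : x ∈ B
    · by_cases hxu : x = u₁
      · exact hxu ▸ hu₁G
      · exact absurd (key_block hbg hB hu₁B hv hvne hxB hxu hadj) (fun h => h)
    · exact hclose v hv x (Or.inl hxB) hadj
  refine ⟨⟨hu₁, hG1 ▸ hu₁G⟩, ?_, ?_⟩
  · -- domination
    intro v hvG hvnS
    rw [hG1] at hvG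
    have hvS : v ∉ S := fun h => hvnS ⟨h, hG1 ▸ hvG⟩
    have hvne : v ≠ u₁ := fun e => hvS (e ▸ hu₁)
    obtain ⟨x, hxS, hadj⟩ := hpd.1 v hvS
    exact ⟨x, ⟨hxS, hG1 ▸ hstep v hvG hvne x hadj⟩, hadj⟩
  · -- matching
    obtain ⟨M, hMv, hM⟩ := hpd.2
    obtain ⟨p, hp, hpu⟩ := hM (show u₁ ∈ M.verts from hMv ▸ hu₁)
    have hpartner : ∀ a ∈ S ∩ componentOf H A u₁, a ≠ u₁ → ∀ b, M.Adj a b →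
        b ∈ S ∩ componentOf H A u₁ := by
      rintro a ⟨haS, haG⟩ hane b hab
      exact ⟨hMv ▸ M.edge_vert hab.symm, hstep a haG hane b (M.adj_sub hab)⟩
    by_cases hpG : p ∈ componentOf H A u₁
    · left
      rw [hG1]
      refine matching_restrict M hMv hM Set.inter_subset_left ?_
      rintro a ha b hab
      by_cases hane : a = u₁
      · subst hane
        have : b = p := hpu b hab
        exact ⟨hMv ▸ M.edge_vert hab.symm, this ▸ hpG⟩
      · exact hpartner a ha hane b hab
    · right
      rw [hG1]
      refine matching_restrict M hMv hM (fun a ha => ha.1.1) ?_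
      rintro a ⟨ha, hane⟩ b hab
      simp only [Set.mem_singleton_iff] at hane
      refine ⟨hpartner a ha hane b hab, ?_⟩
      simp only [Set.mem_singleton_iff]
      intro hbu
      subst hbu
      exact hpG (hpu a hab.symm ▸ ha.2)
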